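/- (Lemma 2 of the paper, converse direction.) Fix n ≥ 1, positive integers p_1,…,p_n with p = p_1 + ⋯ + p_n, reals ρ_1,…,ρ_n > 0, κ > 0, set α_i = κρ_i, and let V = diag(V_1,…,V_n) be block-diagonal symmetric positive definite with V_i of size p_i × p_i. Let E_i denote the p × p_i matrix whose i-th block is I_{p_i} and all other blocks are zero. Suppose Π is a real symmetric positive semidefinite p × p matrix such that V − V Π V is positive definite and, for every 1 ≤ i ≤ n, the block matrix [[I_{p_i}/α_i² + V_i⁻¹, E_iᵀ], [E_i, V − V Π V]] is positive semidefinite but not positive definite. Then κ²((V − V Π V)⁻¹ − V⁻¹) is positive semidefinite, and there exists a real p × p matrix D with DᵀD = κ²((V − V Π V)⁻¹ − V⁻¹); moreover, every such D has column blocks D_i ∈ ℝ^{p×p_i} satisfying ‖D_i‖₂ = 1/ρ_i for all i (so max_i ρ_i‖D_i‖₂ = 1), and satisfies Π = V⁻¹ − V⁻¹(V⁻¹ + DᵀD/κ²)⁻¹V⁻¹. -/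

import Mathlib

open Matrix

/-- The induced 2-norm (largest singular value) of a real matrix. -/
noncomputable def sNorm {m n : Type*} [Fintype m] [Fintype n] [DecidableEq n]
    (M : Matrix m n ℝ) : ℝ :=
  ‖LinearMap.toContinuousLinearMap (Matrix.toEuclideanLin M)‖

/-- The `i`-th column block of a matrix with columns indexed by `(i : Fin n) × Fin (p i)`. -/
def blk {n : ℕ} {p : Fin n → ℕ} {q : Type*}
    (D : Matrix q ((i : Fin n) × Fin (p i)) ℝ) (i : Fin n) :
    Matrix q (Fin (p i)) ℝ :=
  Matrix.of fun r j => D r ⟨i, j⟩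

/-- The tall matrix `E_i` whose `i`-th block is `I_{p_i}` and other blocks are zero. -/
def Emat {n : ℕ} (p : Fin n → ℕ) (i : Fin n) :
    Matrix ((j : Fin n) × Fin (p j)) (Fin (p i)) ℝ :=
  Matrix.of fun x l => if x = ⟨i, l⟩ then 1 else 0

lemma real_conjT {m n : Type*} (A : Matrix m n ℝ) : Aᴴ = Aᵀ := by
  ext i j; simp [conjTranspose_apply]

lemma star_vec {m : Type*} (x : m → ℝ) : star x = x := by
  funext i; simp

lemma dot_sym {k : Type*} [Fintype k] {B : Matrix k k ℝ} (hB : Bᵀ = B) (u v : k → ℝ) :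
    u ⬝ᵥ B *ᵥ v = v ⬝ᵥ B *ᵥ u := by
  rw [dotProduct_mulVec]
  nth_rewrite 1 [← hB]
  rw [vecMul_transpose, dotProduct_comm]

lemma psd_smul {k : Type*} [Fintype k] {M : Matrix k k ℝ} (hM : M.PosSemidef)
    {c : ℝ} (hc : 0 ≤ c) : (c • M).PosSemidef := by
  refine .of_dotProduct_mulVec_nonneg ?_ fun x => ?_
  · unfold Matrix.IsHermitian
    rw [conjTranspose_smul, hM.1]
    simp
  · rw [smul_mulVec, dotProduct_smul, smul_eq_mul]
    exact mul_nonneg hc (hM.dotProduct_mulVec_nonneg x)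

lemma inv_sub_psd {k : Type*} [Fintype k] [DecidableEq k] {A B : Matrix k k ℝ}
    (hA : A.PosDef) (hB : B.PosDef) (hAB : (A - B).PosSemidef) :
    (B⁻¹ - A⁻¹).PosSemidef := by
  have hAu : IsUnit A.det := isUnit_iff_ne_zero.mpr hA.det_pos.ne'
  have hBu : IsUnit B.det := isUnit_iff_ne_zero.mpr hB.det_pos.ne'
  have hBs : Bᵀ = B := by rw [← real_conjT]; exact hB.1
  refine .of_dotProduct_mulVec_nonneg (hB.1.inv.sub hA.1.inv) fun x => ?_
  rw [_root_.star_vec]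
  set y := A⁻¹ *ᵥ x with hy
  set z := B⁻¹ *ᵥ x with hz
  have hAy : A *ᵥ y = x := by
    rw [hy, mulVec_mulVec, Matrix.mul_nonsing_inv _ hAu, one_mulVec]
  have hBz : B *ᵥ z = x := by
    rw [hz, mulVec_mulVec, Matrix.mul_nonsing_inv _ hBu, one_mulVec]
  have h1 : 0 ≤ (y - z) ⬝ᵥ B *ᵥ (y - z) := by
    have := hB.posSemidef.dotProduct_mulVec_nonneg (y - z); rwa [_root_.star_vec] at this
  have h2 : 0 ≤ y ⬝ᵥ (A - B) *ᵥ y := by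
    have := hAB.dotProduct_mulVec_nonneg y; rwa [_root_.star_vec] at this
  have e1 : y ⬝ᵥ B *ᵥ z = y ⬝ᵥ x := by rw [hBz]
  have e2 : z ⬝ᵥ B *ᵥ y = y ⬝ᵥ x := by rw [dot_sym hBs, hBz]
  have e3 : z ⬝ᵥ B *ᵥ z = z ⬝ᵥ x := by rw [hBz]
  have e4 : y ⬝ᵥ A *ᵥ y = y ⬝ᵥ x := by rw [hAy]
  have t1 : x ⬝ᵥ z = z ⬝ᵥ x := dotProduct_comm _ _
  have t2 : x ⬝ᵥ y = y ⬝ᵥ x := dotProduct_comm _ _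
  simp only [mulVec_sub, sub_mulVec, dotProduct_sub, sub_dotProduct] at h1 h2 ⊢
  linarith

lemma euc_norm_sq {k : Type*} [Fintype k] (x : EuclideanSpace ℝ k) :
    ‖x‖ ^ 2 = (WithLp.equiv 2 (k → ℝ)) x ⬝ᵥ (WithLp.equiv 2 (k → ℝ)) x := by
  rw [EuclideanSpace.norm_eq, Real.sq_sqrt (by positivity)]
  simp [dotProduct, sq]

lemma norm_key {q k : Type*} [Fintype q] [Fintype k] [DecidableEq k]
    (B : Matrix q k ℝ) (c : ℝ) (hc : 0 ≤ c) (T : Matrix k k ℝ) (hT : T.PosSemidef)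
    (x₀ : k → ℝ) (hx₀ : x₀ ≠ 0) (hTx : T *ᵥ x₀ = 0)
    (hB : Bᵀ * B = c ^ 2 • (1 : Matrix k k ℝ) - T) : sNorm B = c := by
  have key : ∀ v : k → ℝ,
      ‖toEuclideanLin B ((WithLp.equiv 2 (k → ℝ)).symm v)‖ ^ 2
        = c ^ 2 * (v ⬝ᵥ v) - v ⬝ᵥ T *ᵥ v := by
    intro v
    have h1 : ‖toEuclideanLin B ((WithLp.equiv 2 (k → ℝ)).symm v)‖ ^ 2
        = (B *ᵥ v) ⬝ᵥ (B *ᵥ v) := by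
      rw [show toEuclideanLin B ((WithLp.equiv 2 (k → ℝ)).symm v) = (WithLp.equiv 2 (q → ℝ)).symm (B *ᵥ v) from rfl, euc_norm_sq]
      congr 1
    have h2 : (B *ᵥ v) ⬝ᵥ (B *ᵥ v) = v ⬝ᵥ (Bᵀ * B) *ᵥ v := by
      rw [← mulVec_mulVec]
      conv_rhs => rw [dotProduct_mulVec, vecMul_transpose]
    rw [h1, h2, hB, sub_mulVec, smul_mulVec, one_mulVec, dotProduct_sub,
      dotProduct_smul, smul_eq_mul]
  set L := LinearMap.toContinuousLinearMap (toEuclideanLin B) with hL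
  have hLapp : ∀ x : EuclideanSpace ℝ k, L x = toEuclideanLin B x := fun x => rfl
  have hnsq : ∀ x : EuclideanSpace ℝ k,
      ‖L x‖ ^ 2 = c ^ 2 * ‖x‖ ^ 2 - (WithLp.equiv 2 (k → ℝ)) x ⬝ᵥ T *ᵥ (WithLp.equiv 2 (k → ℝ)) x := by
    intro x
    have h := key ((WithLp.equiv 2 (k → ℝ)) x)
    rw [euc_norm_sq x]
    exact h
  have hub : ∀ x : EuclideanSpace ℝ k, ‖L x‖ ≤ c * ‖x‖ := by
    intro x
    have h := hnsq x
    have hTnn : 0 ≤ (WithLp.equiv 2 (k → ℝ)) x ⬝ᵥ T *ᵥ (WithLp.equiv 2 (k → ℝ)) x := by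
      have := hT.dotProduct_mulVec_nonneg ((WithLp.equiv 2 (k → ℝ)) x); rwa [_root_.star_vec] at this
    have hsq : ‖L x‖ ^ 2 ≤ (c * ‖x‖) ^ 2 := by rw [mul_pow]; linarith
    calc ‖L x‖ = Real.sqrt (‖L x‖ ^ 2) := (Real.sqrt_sq (norm_nonneg _)).symm
      _ ≤ Real.sqrt ((c * ‖x‖) ^ 2) := Real.sqrt_le_sqrt hsq
      _ = c * ‖x‖ := Real.sqrt_sq (by positivity)
  set x₀' : EuclideanSpace ℝ k := (WithLp.equiv 2 (k → ℝ)).symm x₀ with hx₀'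
  have heq : ‖L x₀'‖ = c * ‖x₀'‖ := by
    have h := hnsq x₀'
    have he : (WithLp.equiv 2 (k → ℝ)) x₀' = x₀ := rfl
    rw [he, hTx, dotProduct_zero, sub_zero, ← mul_pow] at h
    calc ‖L x₀'‖ = Real.sqrt (‖L x₀'‖ ^ 2) := (Real.sqrt_sq (norm_nonneg _)).symm
      _ = Real.sqrt ((c * ‖x₀'‖) ^ 2) := by rw [h]
      _ = c * ‖x₀'‖ := Real.sqrt_sq (by positivity)
  have hx₀'ne : x₀' ≠ 0 := by
    intro h
    apply hx₀
    have := congrArg (WithLp.equiv 2 (k → ℝ)) h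
    exact this
  have hpos : 0 < ‖x₀'‖ := norm_pos_iff.mpr hx₀'ne
  have hge : c ≤ ‖L‖ := by
    have h := L.le_opNorm x₀'
    rw [heq] at h
    exact le_of_mul_le_mul_right h hpos
  have hle : ‖L‖ ≤ c := L.opNorm_le_bound hc hub
  unfold sNorm
  exact le_antisymm hle hge

lemma blk_eq {n : ℕ} {p : Fin n → ℕ} {q : Type*} [Fintype q]
    (D : Matrix q ((i : Fin n) × Fin (p i)) ℝ) (i : Fin n) :
    blk D i = D * Emat p i := by
  ext r j
  simp only [blk, Emat, Matrix.of_apply, mul_apply, mul_ite, mul_one, mul_zero]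
  rw [Finset.sum_ite_eq' Finset.univ (⟨i, j⟩ : (i : Fin n) × Fin (p i)) (fun x => D r x)]
  simp

lemma EtME {n : ℕ} {p : Fin n → ℕ} (i : Fin n)
    (M : Matrix ((j : Fin n) × Fin (p j)) ((j : Fin n) × Fin (p j)) ℝ) :
    (Emat p i)ᵀ * M * Emat p i = Matrix.of fun k l => M ⟨i, k⟩ ⟨i, l⟩ := by
  ext k l
  simp only [Matrix.of_apply, mul_apply, transpose_apply, Emat, Matrix.of_apply,
    ite_mul, one_mul, zero_mul, mul_ite, mul_one, mul_zero]
  rw [Finset.sum_ite_eq' Finset.univ (⟨i, l⟩ : (j : Fin n) × Fin (p j))]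
  simp only [Finset.mem_univ, if_true]
  rw [Finset.sum_ite_eq' Finset.univ (⟨i, k⟩ : (j : Fin n) × Fin (p j))]
  simp
/-- **Lemma 2 of the paper, converse direction.** If `Π ⪰ 0` is such that `V − VΠV ≻ 0`
and for every `i` the block matrix `[[I/α_i² + V_i⁻¹, E_iᵀ],[E_i, V − VΠV]]` is PSD but
not positive definite, then `κ²((V − VΠV)⁻¹ − V⁻¹) ⪰ 0`, some `D` factors it as `DᵀD`,
and every such `D` has `‖D_i‖₂ = 1/ρ_i` for all `i` and reproduces `Π`. -/
theorem stmt_9 {n : ℕ} (hn : 1 ≤ n) (p : Fin n → ℕ) (hp : ∀ i, 0 < p i)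
    (ρ : Fin n → ℝ) (hρ : ∀ i, 0 < ρ i) (κ : ℝ) (hκ : 0 < κ)
    (α : Fin n → ℝ) (hα : ∀ i, α i = κ * ρ i)
    (Vb : ∀ i : Fin n, Matrix (Fin (p i)) (Fin (p i)) ℝ)
    (hVb : ∀ i, (Vb i).PosDef)
    (V : Matrix ((i : Fin n) × Fin (p i)) ((i : Fin n) × Fin (p i)) ℝ)
    (hV : V = Matrix.blockDiagonal' Vb)
    (Pi : Matrix ((i : Fin n) × Fin (p i)) ((i : Fin n) × Fin (p i)) ℝ)
    (hPi : Pi.PosSemidef)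
    (hPD : (V - V * Pi * V).PosDef)
    (hLMI : ∀ i : Fin n,
      (Matrix.fromBlocks
          (((α i) ^ 2)⁻¹ • (1 : Matrix (Fin (p i)) (Fin (p i)) ℝ) + (Vb i)⁻¹)
          (Emat p i)ᵀ (Emat p i) (V - V * Pi * V)).PosSemidef ∧
      ¬ (Matrix.fromBlocks
          (((α i) ^ 2)⁻¹ • (1 : Matrix (Fin (p i)) (Fin (p i)) ℝ) + (Vb i)⁻¹)
          (Emat p i)ᵀ (Emat p i) (V - V * Pi * V)).PosDef) :
    (κ ^ 2 • ((V - V * Pi * V)⁻¹ - V⁻¹)).PosSemidef ∧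
    (∃ D : Matrix ((i : Fin n) × Fin (p i)) ((i : Fin n) × Fin (p i)) ℝ,
        Dᵀ * D = κ ^ 2 • ((V - V * Pi * V)⁻¹ - V⁻¹)) ∧
    ∀ D : Matrix ((i : Fin n) × Fin (p i)) ((i : Fin n) × Fin (p i)) ℝ,
      Dᵀ * D = κ ^ 2 • ((V - V * Pi * V)⁻¹ - V⁻¹) →
        (∀ i : Fin n, sNorm (blk D i) = 1 / ρ i) ∧
        (⨆ i : Fin n, ρ i * sNorm (blk D i)) = 1 ∧
        Pi = V⁻¹ - V⁻¹ * (V⁻¹ + (κ ^ 2)⁻¹ • (Dᵀ * D))⁻¹ * V⁻¹ := by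
  haveI : Nonempty (Fin n) := ⟨⟨0, hn⟩⟩
  set W := V - V * Pi * V with hWdef
  -- basic facts about V
  have hVH : V.IsHermitian := by
    rw [hV]
    show (Matrix.blockDiagonal' Vb)ᴴ = Matrix.blockDiagonal' Vb
    rw [blockDiagonal'_conjTranspose]
    exact congrArg _ (funext fun j => (hVb j).1)
  have hVPiV : (V * Pi * V).PosSemidef := by
    have h := hPi.mul_mul_conjTranspose_same V
    rwa [hVH.eq] at h
  have hVpd : V.PosDef := by
    have hsum : V = W + V * Pi * V := by rw [hWdef]; abel
    rw [hsum]
    exact hPD.add_posSemidef hVPiV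
  have hVdet : IsUnit V.det := isUnit_iff_ne_zero.mpr hVpd.det_pos.ne'
  have hWdet : IsUnit W.det := isUnit_iff_ne_zero.mpr hPD.det_pos.ne'
  haveI : Invertible W := W.invertibleOfIsUnitDet hWdet
  have hVinv : V⁻¹ = Matrix.blockDiagonal' (fun j => (Vb j)⁻¹) := by
    apply Matrix.inv_eq_right_inv
    rw [hV, ← Matrix.blockDiagonal'_mul]
    rw [show (fun k => Vb k * (Vb k)⁻¹) = fun _ => 1 from
      funext fun k => Matrix.mul_nonsing_inv _ (isUnit_iff_ne_zero.mpr (hVb k).det_pos.ne')]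
    exact Matrix.blockDiagonal'_one
  have hMps : (W⁻¹ - V⁻¹).PosSemidef := by
    apply inv_sub_psd hVpd hPD
    have : V - W = V * Pi * V := by rw [hWdef]; abel
    rw [this]
    exact hVPiV
  have hgoal1 : (κ ^ 2 • (W⁻¹ - V⁻¹)).PosSemidef := psd_smul hMps (sq_nonneg κ)
  refine ⟨hgoal1, ?_, ?_⟩
  · obtain ⟨B, hB⟩ := (by open scoped MatrixOrder Matrix.Norms.L2Operator in exact CStarAlgebra.nonneg_iff_eq_star_mul_self.mp hgoal1.nonneg : ∃ B : Matrix _ _ ℝ, _ = Bᴴ * B)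
    exact ⟨B, by rw [← real_conjT]; exact hB.symm⟩
  intro D hD
  -- the i-th diagonal block of V⁻¹
  have hEVE : ∀ i, (Emat p i)ᵀ * V⁻¹ * Emat p i = (Vb i)⁻¹ := by
    intro i
    rw [hVinv, EtME]
    ext k l
    simp [Matrix.blockDiagonal'_apply_eq]
  have hnorm : ∀ i, sNorm (blk D i) = 1 / ρ i := by
    intro i
    obtain ⟨hPSDi, hnPDi⟩ := hLMI i
    have hE : ((Emat p i)ᵀ)ᴴ = Emat p i := by rw [real_conjT, transpose_transpose]
    set A := ((α i) ^ 2)⁻¹ • (1 : Matrix (Fin (p i)) (Fin (p i)) ℝ) + (Vb i)⁻¹ with hAdef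
    have hSpsd : (A - (Emat p i)ᵀ * W⁻¹ * Emat p i).PosSemidef := by
      have h := (Matrix.PosDef.fromBlocks₂₂ A (Emat p i)ᵀ hPD).mp (by rw [hE]; exact hPSDi)
      rwa [hE] at h
    -- find x ≠ 0 in the kernel of the Schur complement
    obtain ⟨z, hzne, hzq⟩ : ∃ z, z ≠ 0 ∧
        star z ⬝ᵥ (Matrix.fromBlocks A (Emat p i)ᵀ (Emat p i) W *ᵥ z) = 0 := by
      by_contra h
      push_neg at h
      exact hnPDi (.of_dotProduct_mulVec_pos hPSDi.1 fun x hx => (hPSDi.dotProduct_mulVec_nonneg x).lt_of_ne' (h x hx))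
    have hz0 : Matrix.fromBlocks A (Emat p i)ᵀ (Emat p i) W *ᵥ z = 0 :=
      (hPSDi.dotProduct_mulVec_zero_iff z).mp hzq
    rw [Matrix.fromBlocks_mulVec] at hz0
    set x := z ∘ Sum.inl with hxdef
    set y := z ∘ Sum.inr with hydef
    have hTop : A *ᵥ x + (Emat p i)ᵀ *ᵥ y = 0 := by
      funext a; exact congrFun hz0 (Sum.inl a)
    have hBot : Emat p i *ᵥ x + W *ᵥ y = 0 := by
      funext a; exact congrFun hz0 (Sum.inr a)
    have hxne : x ≠ 0 := by
      intro hx0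
      have hWy : W *ᵥ y = 0 := by
        rw [hx0, Matrix.mulVec_zero, zero_add] at hBot; exact hBot
      have hy0 : y = 0 := by
        have : W⁻¹ *ᵥ (W *ᵥ y) = y := by
          rw [Matrix.mulVec_mulVec, Matrix.nonsing_inv_mul _ hWdet, Matrix.one_mulVec]
        rw [hWy, Matrix.mulVec_zero] at this
        exact this.symm
      apply hzne
      funext s
      cases s with
      | inl a => exact congrFun hx0 a
      | inr a => exact congrFun hy0 a
    have hyeq : y = -(W⁻¹ *ᵥ (Emat p i *ᵥ x)) := by
      have h1 : W *ᵥ y = -(Emat p i *ᵥ x) := by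
        rw [eq_neg_iff_add_eq_zero, add_comm]; exact hBot
      have : W⁻¹ *ᵥ (W *ᵥ y) = y := by
        rw [Matrix.mulVec_mulVec, Matrix.nonsing_inv_mul _ hWdet, Matrix.one_mulVec]
      rw [← this, h1, Matrix.mulVec_neg]
    have hSx : (A - (Emat p i)ᵀ * W⁻¹ * Emat p i) *ᵥ x = 0 := by
      rw [Matrix.sub_mulVec]
      have h2 : ((Emat p i)ᵀ * W⁻¹ * Emat p i) *ᵥ x = -((Emat p i)ᵀ *ᵥ y) := by
        rw [hyeq, Matrix.mulVec_neg, neg_neg, ← Matrix.mulVec_mulVec, ← Matrix.mulVec_mulVec]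
      rw [h2, sub_neg_eq_add]
      exact hTop
    -- apply the norm lemma
    have hρi := hρ i
    have hα2 : (1 / ρ i) ^ 2 = κ ^ 2 * ((α i) ^ 2)⁻¹ := by
      rw [hα]; field_simp
    have hBB : (blk D i)ᵀ * blk D i =
        (1 / ρ i) ^ 2 • (1 : Matrix (Fin (p i)) (Fin (p i)) ℝ)
          - κ ^ 2 • (A - (Emat p i)ᵀ * W⁻¹ * Emat p i) := by
      have lhs : (blk D i)ᵀ * blk D i = (Emat p i)ᵀ * (Dᵀ * D) * Emat p i := by
        rw [blk_eq, Matrix.transpose_mul]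
        simp only [Matrix.mul_assoc]
      rw [lhs, hD]
      rw [Matrix.mul_smul, Matrix.smul_mul, smul_sub, Matrix.mul_sub, Matrix.sub_mul, hEVE i]
      rw [hAdef, smul_sub, smul_add, smul_smul, ← hα2]
      abel
    exact norm_key (blk D i) (1 / ρ i) (by positivity)
      (κ ^ 2 • (A - (Emat p i)ᵀ * W⁻¹ * Emat p i))
      (psd_smul hSpsd (sq_nonneg κ)) x hxne
      (by rw [Matrix.smul_mulVec, hSx, smul_zero]) hBB
  refine ⟨hnorm, ?_, ?_⟩
  · have hs : ∀ i, ρ i * sNorm (blk D i) = 1 := by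
      intro i; rw [hnorm i, mul_one_div, div_self (hρ i).ne']
    simp only [hs]
    exact ciSup_const
  · have hκ2 : (κ ^ 2)⁻¹ • (Dᵀ * D) = W⁻¹ - V⁻¹ := by
      rw [hD, smul_smul, inv_mul_cancel₀ (by positivity), one_smul]
    rw [hκ2, add_sub_cancel, Matrix.nonsing_inv_nonsing_inv _ hWdet]
    have e : V⁻¹ * W * V⁻¹ = V⁻¹ - Pi := by
      rw [hWdef]
      simp only [Matrix.mul_sub, Matrix.sub_mul, ← Matrix.mul_assoc]
      rw [Matrix.nonsing_inv_mul _ hVdet]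
      simp only [Matrix.one_mul]
      rw [Matrix.mul_assoc Pi, Matrix.mul_nonsing_inv _ hVdet, Matrix.mul_one]
    rw [e]
    abel
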